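/- Let Λ be an A-lattice of rank r in L and u ∈ K·Λ, and let P_{u,Λ} := (1 − q^r·S)·Z_{u,Λ}, a Hahn series with finite support. Then the sum of all coefficients of P_{u,Λ} equals q^r − 1 if u ∈ Λ, and equals 0 if u ∉ Λ. (Equivalently, the value at S = 1 of the rational function Z_{u,Λ} is −1 if u ∈ Λ and 0 otherwise.) -/

import Mathlib

open scoped Classical

noncomputable section

variable {Fq : Type*} [Field Fq] [Fintype Fq]
variable {L : Type*} [NormedField L] [CompleteSpace L]
variable [Algebra (Polynomial Fq) L]

/-- `log_q |z|`. -/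
def logq (q : ℕ) (z : L) : ℝ := Real.logb q ‖z‖

/-- An `A = 𝔽_q[T]`-lattice of rank `r` in `L`: a finitely generated `A`-submodule which is
free of rank `r` (equivalently: its `𝔽_q(T)`-span has dimension `r`), and which is
discrete in `L` (finite intersection with every bounded ball). -/
def IsLatticeOfRank (r : ℕ) (Λ : Submodule (Polynomial Fq) L) : Prop :=
  (∃ b : Fin r → L, LinearIndependent (Polynomial Fq) b ∧
      Submodule.span (Polynomial Fq) (Set.range b) = Λ) ∧
  ∀ B : ℝ, {x : L | x ∈ Λ ∧ ‖x‖ ≤ B}.Finite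

/-- Membership in `K·Λ`, the `K = 𝔽_q(T)`-span of `Λ` in `L`. -/
def InKSpan (Λ : Submodule (Polynomial Fq) L) (u : L) : Prop :=
  ∃ n : Polynomial Fq, n ≠ 0 ∧ n • u ∈ Λ

/-- The exponential function of the lattice `Λ`: `e^Λ(z) = z·∏_{0≠λ∈Λ} (1 - z/λ)`. -/
def latExp (Λ : Submodule (Polynomial Fq) L) (z : L) : L :=
  z * ∏' l : {x : L // x ∈ Λ ∧ x ≠ 0}, (1 - z / (l : L))

/-- The coefficient of `S^x` in the `Z`-function `Z_{u,Λ}`: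
the number of `λ ∈ u + Λ`, `λ ≠ 0`, with `log λ = x`. -/
def zCoef (q : ℕ) (Λ : Submodule (Polynomial Fq) L) (u : L) (x : ℚ) : ℕ :=
  Nat.card {l : L | l ≠ 0 ∧ l - u ∈ Λ ∧ logq q l = (x : ℝ)}


def wmap {r : ℕ} (b : Fin r → L) (c : Fin r → Fq) : L :=
  ∑ i, (Polynomial.C (c i)) • b i

lemma decomp_exists {r : ℕ} {b : Fin r → L} {Λ : Submodule (Polynomial Fq) L}
    (hspan : Submodule.span (Polynomial Fq) (Set.range b) = Λ) {μ : L} (hμ : μ ∈ Λ) :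
    ∃ (c : Fin r → Fq) (ν : L), ν ∈ Λ ∧
      μ = wmap b c + algebraMap (Polynomial Fq) L Polynomial.X * ν := by
  rw [← hspan, Submodule.mem_span_range_iff_exists_fun] at hμ
  obtain ⟨a, ha⟩ := hμ
  refine ⟨fun i => (a i).coeff 0, ∑ i, (a i).divX • b i, ?_, ?_⟩
  · rw [← hspan]
    exact Submodule.sum_mem _ fun i _ =>
      Submodule.smul_mem _ _ (Submodule.subset_span ⟨i, rfl⟩)
  · have key : ∀ i : Fin r, a i • b i
        = (Polynomial.C ((a i).coeff 0)) • b i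
          + algebraMap (Polynomial Fq) L Polynomial.X * ((a i).divX • b i) := by
      intro i
      conv_lhs => rw [← (a i).divX_mul_X_add]
      rw [add_smul, add_comm, Algebra.smul_def, Algebra.smul_def, Algebra.smul_def,
        map_mul]
      ring
    calc μ = ∑ i, a i • b i := ha.symm
    _ = ∑ i, ((Polynomial.C ((a i).coeff 0)) • b i
          + algebraMap (Polynomial Fq) L Polynomial.X * ((a i).divX • b i)) :=
        Finset.sum_congr rfl fun i _ => key i
    _ = wmap b (fun i => (a i).coeff 0)
          + algebraMap (Polynomial Fq) L Polynomial.X * ∑ i, (a i).divX • b i := by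
        rw [Finset.sum_add_distrib, Finset.mul_sum]; rfl

lemma decomp_unique {r : ℕ} {b : Fin r → L} {Λ : Submodule (Polynomial Fq) L}
    (hli : LinearIndependent (Polynomial Fq) b)
    (hspan : Submodule.span (Polynomial Fq) (Set.range b) = Λ)
    {c c' : Fin r → Fq} {ν ν' : L} (hν : ν ∈ Λ) (hν' : ν' ∈ Λ)
    (h : wmap b c + algebraMap (Polynomial Fq) L Polynomial.X * ν
       = wmap b c' + algebraMap (Polynomial Fq) L Polynomial.X * ν') :
    c = c' ∧ ν = ν' := by
  have hd : ν - ν' ∈ Λ := Submodule.sub_mem _ hν hν'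
  rw [← hspan, Submodule.mem_span_range_iff_exists_fun] at hd
  obtain ⟨d, hdeq⟩ := hd
  have key : ∑ i, ((Polynomial.C (c i) - Polynomial.C (c' i)) + Polynomial.X * d i) • b i = 0 := by
    have hXd : algebraMap (Polynomial Fq) L Polynomial.X * (ν - ν')
        = ∑ i, (Polynomial.X * d i) • b i := by
      rw [← hdeq, Finset.mul_sum]
      refine Finset.sum_congr rfl fun i _ => ?_
      simp [mul_smul, Algebra.smul_def, mul_assoc]
    have h0 := sub_eq_zero.mpr h
    rw [wmap, wmap] at h0
    have expand : (∑ i, (Polynomial.C (c i)) • b i) + algebraMap (Polynomial Fq) L Polynomial.X * ν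
        - ((∑ i, (Polynomial.C (c' i)) • b i) + algebraMap (Polynomial Fq) L Polynomial.X * ν')
        = ∑ i, ((Polynomial.C (c i) - Polynomial.C (c' i)) + Polynomial.X * d i) • b i := by
      have hmul : algebraMap (Polynomial Fq) L Polynomial.X * ν
          - algebraMap (Polynomial Fq) L Polynomial.X * ν'
          = algebraMap (Polynomial Fq) L Polynomial.X * (ν - ν') := by ring
      rw [add_sub_add_comm, hmul, hXd, ← Finset.sum_sub_distrib, ← Finset.sum_add_distrib]
      refine Finset.sum_congr rfl fun i _ => ?_
      rw [← sub_smul, ← add_smul]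
    rw [expand] at h0
    exact h0
  have hz := Fintype.linearIndependent_iff.mp hli _ key
  have hc : ∀ i, c i = c' i := by
    intro i
    have h0 := congrArg (fun p => Polynomial.coeff p 0) (hz i)
    simp only [Polynomial.coeff_add, Polynomial.coeff_sub, Polynomial.coeff_C_zero,
      Polynomial.mul_coeff_zero, Polynomial.coeff_X_zero, zero_mul, add_zero,
      Polynomial.coeff_zero] at h0
    exact sub_eq_zero.mp h0
  have hdz : ∀ i, d i = 0 := by
    intro i
    have h0 := hz i
    rw [hc i, sub_self, zero_add, mul_eq_zero] at h0
    rcases h0 with h0 | h0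
    · exact absurd h0 Polynomial.X_ne_zero
    · exact h0
  refine ⟨funext hc, ?_⟩
  have hvv : ν - ν' = 0 := by
    rw [← hdeq]
    simp [hdz]
  exact sub_eq_zero.mp hvv

lemma pmax {P : ℝ → Prop} (a b : ℝ) (ha : P a) (hb : P b) : P (max a b) := by
  rcases max_choice a b with h | h <;> rw [h] <;> assumption

lemma norm_sub_le_max (hna : ∀ x y : L, ‖x + y‖ ≤ max ‖x‖ ‖y‖) (x y : L) :
    ‖x - y‖ ≤ max ‖x‖ ‖y‖ := by
  have := hna x (-y)
  simpa [sub_eq_add_neg] using this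

lemma translate_card (u : L) (hna : ∀ x y : L, ‖x + y‖ ≤ max ‖x‖ ‖y‖)
    (Λ : Submodule (Polynomial Fq) L)
    (P : ℝ → Prop) (hPd : ∀ a b : ℝ, a ≤ b → P b → P a) (hu : P ‖u‖) :
    Nat.card {l : L | l - u ∈ Λ ∧ P ‖l‖} = Nat.card {μ : L | μ ∈ Λ ∧ P ‖μ‖} := by
  refine Nat.card_congr ⟨fun l => ⟨l.1 - u, l.2.1, hPd _ _ (norm_sub_le_max hna _ _)
      (pmax _ _ l.2.2 hu)⟩,
    fun m => ⟨m.1 + u, by simp [m.2.1], hPd _ _ (hna _ _) (pmax _ _ m.2.2 hu)⟩,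
    fun l => by simp, fun m => by simp⟩

lemma doubling_card (q : ℕ) (hq : Fintype.card Fq = q)
    {r : ℕ} {b : Fin r → L} {Λ : Submodule (Polynomial Fq) L}
    (hli : LinearIndependent (Polynomial Fq) b)
    (hspan : Submodule.span (Polynomial Fq) (Set.range b) = Λ)
    (hna : ∀ x y : L, ‖x + y‖ ≤ max ‖x‖ ‖y‖)
    (ht : ‖algebraMap (Polynomial Fq) L Polynomial.X‖ = (q : ℝ))
    (p P : ℝ → Prop) (hPd : ∀ a b : ℝ, a ≤ b → P b → P a)
    (hscale : ∀ s : ℝ, 0 ≤ s → (P ((q : ℝ) * s) ↔ p s))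
    (hw : ∀ c : Fin r → Fq, P ‖wmap b c‖) :
    Nat.card {μ : L | μ ∈ Λ ∧ P ‖μ‖} = q ^ r * Nat.card {ν : L | ν ∈ Λ ∧ p ‖ν‖} := by
  set t : L := algebraMap (Polynomial Fq) L Polynomial.X with hts
  have htν : ∀ ν : L, t * ν = Polynomial.X • ν := fun ν => (Algebra.smul_def _ _).symm
  have hmemw : ∀ c, wmap b c ∈ Λ := fun c => by
    rw [← hspan]
    exact Submodule.sum_mem _ fun i _ =>
      Submodule.smul_mem _ _ (Submodule.subset_span ⟨i, rfl⟩)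
  have hnt : ∀ ν : L, ‖t * ν‖ = (q : ℝ) * ‖ν‖ := fun ν => by rw [norm_mul, ht]
  set g : (Fin r → Fq) × {ν : L // ν ∈ Λ ∧ p ‖ν‖} → {μ : L // μ ∈ Λ ∧ P ‖μ‖} :=
    fun cv => ⟨wmap b cv.1 + t * cv.2.1,
      by
        refine ⟨Submodule.add_mem _ (hmemw _) ?_, ?_⟩
        · rw [htν]
          exact Submodule.smul_mem _ _ cv.2.2.1
        · refine hPd _ _ (hna _ _) (pmax _ _ (hw _) ?_)
          rw [hnt]
          exact (hscale _ (norm_nonneg _)).mpr cv.2.2.2⟩ with hg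
  have hbij : Function.Bijective g := by
    constructor
    · rintro ⟨c, ν, hν⟩ ⟨c', ν', hν'⟩ hgeq
      have heq : wmap b c + t * ν = wmap b c' + t * ν' := congrArg Subtype.val hgeq
      obtain ⟨hc, hv⟩ := decomp_unique hli hspan hν.1 hν'.1 heq
      simp only [Prod.mk.injEq, Subtype.mk.injEq]
      exact ⟨hc, hv⟩
    · rintro ⟨μ, hμ, hP⟩
      obtain ⟨c, ν, hν, heq⟩ := decomp_exists hspan hμ
      have hpν : p ‖ν‖ := by
        have h1 : t * ν = μ - wmap b c := by rw [heq]; ring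
        have h2 : ‖t * ν‖ ≤ max ‖μ‖ ‖wmap b c‖ := by
          rw [h1]; exact norm_sub_le_max hna _ _
        have h3 : P ‖t * ν‖ := hPd _ _ h2 (pmax _ _ hP (hw c))
        rw [hnt] at h3
        exact (hscale _ (norm_nonneg _)).mp h3
      exact ⟨⟨c, ν, hν, hpν⟩, by simp only [hg, Subtype.mk.injEq]; exact heq.symm⟩
  have hcard := Nat.card_congr (Equiv.ofBijective g hbij)
  rw [Nat.card_prod] at hcard
  have hfun : Nat.card (Fin r → Fq) = q ^ r := by
    rw [Nat.card_fun, Nat.card_eq_fintype_card, Nat.card_eq_fintype_card, hq, Fintype.card_fin]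
  rw [hfun] at hcard
  exact hcard.symm

/-- The sum of the coefficients of `P_{u,Λ} = (1 - q^r S)·Z_{u,Λ}` equals
`q^r - 1` if `u ∈ Λ`, and `0` otherwise (i.e. `Z_{u,Λ}(1) = -1` resp. `0`). -/
theorem statement7
    (q : ℕ) (hq : Fintype.card Fq = q)
    (hna : ∀ x y : L, ‖x + y‖ ≤ max ‖x‖ ‖y‖)
    (hA : ∀ a : Polynomial Fq, a ≠ 0 →
      ‖algebraMap (Polynomial Fq) L a‖ = (q : ℝ) ^ a.natDegree)
    (hval : ∀ x : L, x ≠ 0 → ∃ s : ℚ, ‖x‖ = (q : ℝ) ^ (s : ℝ))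
    (r : ℕ)
    (Λ : Submodule (Polynomial Fq) L) (hΛ : IsLatticeOfRank r Λ)
    (u : L) (hu : InKSpan Λ u) :
    (∑ᶠ x : ℚ, ((zCoef q Λ u x : ℤ) - (q : ℤ) ^ r * zCoef q Λ u (x - 1))) =
      if u ∈ Λ then (q : ℤ) ^ r - 1 else 0 := by
  classical
  obtain ⟨⟨b, hli, hspan⟩, hdisc⟩ := hΛ
  -- basic facts about q
  have hq2 : 1 < q := hq ▸ Fintype.one_lt_card
  have hq1R : (1 : ℝ) < q := by exact_mod_cast hq2
  have hq0R : (0 : ℝ) < q := zero_lt_one.trans hq1R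
  have hqne1 : (q : ℝ) ≠ 1 := ne_of_gt hq1R
  have ht : ‖algebraMap (Polynomial Fq) L Polynomial.X‖ = (q : ℝ) := by
    rw [hA Polynomial.X Polynomial.X_ne_zero, Polynomial.natDegree_X, pow_one]
  -- bound for the representatives
  obtain ⟨Bw, hBw⟩ : ∃ Bw : ℝ, ∀ c : Fin r → Fq, ‖wmap b c‖ ≤ Bw := by
    obtain ⟨Bw, hBw⟩ := (Set.finite_range (fun c : Fin r → Fq => ‖wmap b c‖)).bddAbove
    exact ⟨Bw, fun c => hBw (Set.mem_range_self c)⟩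
  set B0 : ℝ := max ‖u‖ Bw with hB0def
  obtain ⟨n, hn⟩ : ∃ n : ℕ, B0 < (q : ℝ) ^ n := pow_unbounded_of_one_lt B0 hq1R
  set M : ℚ := (n : ℚ) + 1 with hMdef
  -- notation
  set R : ℚ → ℝ := fun x => (q : ℝ) ^ (x : ℝ) with hRdef
  set NN : ℚ → ℕ := fun x => zCoef q Λ u x with hNNdef
  set CCle : ℝ → ℕ := fun B => Nat.card {l : L | l - u ∈ Λ ∧ ‖l‖ ≤ B} with hCCledef
  set CClt : ℝ → ℕ := fun B => Nat.card {l : L | l - u ∈ Λ ∧ ‖l‖ < B} with hCCltdef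
  set lev : ℚ → Set L := fun x => {l : L | l - u ∈ Λ ∧ ‖l‖ = R x} with hlevdef
  -- (F1) finiteness of balls
  have F1 : ∀ B : ℝ, {l : L | l - u ∈ Λ ∧ ‖l‖ ≤ B}.Finite := by
    intro B
    have hsub : {l : L | l - u ∈ Λ ∧ ‖l‖ ≤ B} ⊆
        (fun l : L => l - u) ⁻¹' {x : L | x ∈ Λ ∧ ‖x‖ ≤ max B ‖u‖} := by
      rintro l ⟨h1, h2⟩
      exact ⟨h1, le_trans (norm_sub_le_max hna l u)
        (max_le_max h2 le_rfl)⟩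
    refine Set.Finite.subset (Set.Finite.preimage ?_ (hdisc (max B ‖u‖))) hsub
    exact Set.injOn_of_injective (fun a a' h => by simpa using congrArg (· + u) h)
  have F1lev : ∀ x : ℚ, (lev x).Finite := fun x =>
    (F1 (R x)).subset (fun l hl => ⟨hl.1, le_of_eq hl.2⟩)
  have F1lt : ∀ B : ℝ, {l : L | l - u ∈ Λ ∧ ‖l‖ < B}.Finite := fun B =>
    (F1 B).subset (fun l hl => ⟨hl.1, le_of_lt hl.2⟩)
  -- (F2) zCoef = card of level set
  have F2 : ∀ x : ℚ, NN x = Nat.card (lev x) := by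
    intro x
    have hset : {l : L | l ≠ 0 ∧ l - u ∈ Λ ∧ logq q l = (x : ℝ)} = lev x := by
      ext l
      simp only [hlevdef, Set.mem_setOf_eq, logq, hRdef]
      constructor
      · rintro ⟨h0, h1, h2⟩
        refine ⟨h1, ?_⟩
        rw [← h2]
        exact (Real.rpow_logb hq0R hqne1 (norm_pos_iff.mpr h0)).symm ▸ rfl
      · rintro ⟨h1, h2⟩
        have hpos : (0 : ℝ) < ‖l‖ := h2 ▸ Real.rpow_pos_of_pos hq0R _
        refine ⟨norm_pos_iff.mp hpos, h1, ?_⟩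
        rw [h2, Real.logb_rpow hq0R hqne1]
    rw [hNNdef]
    simp only [zCoef, hset]
  -- (F3) splitting closed ball into open ball and sphere
  have F3 : ∀ x : ℚ, CClt (R x) + NN x = CCle (R x) := by
    intro x
    have hsplit : {l : L | l - u ∈ Λ ∧ ‖l‖ ≤ R x}
        = {l : L | l - u ∈ Λ ∧ ‖l‖ < R x} ∪ lev x := by
      ext l
      simp only [Set.mem_setOf_eq, Set.mem_union, hlevdef]
      constructor
      · rintro ⟨h1, h2⟩
        rcases lt_or_eq_of_le h2 with h | h
        · exact Or.inl ⟨h1, h⟩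
        · exact Or.inr ⟨h1, h⟩
      · rintro (⟨h1, h2⟩ | ⟨h1, h2⟩)
        · exact ⟨h1, le_of_lt h2⟩
        · exact ⟨h1, le_of_eq h2⟩
    have hdisj : Disjoint {l : L | l - u ∈ Λ ∧ ‖l‖ < R x} (lev x) := by
      rw [Set.disjoint_left]
      rintro l ⟨h1, h2⟩ ⟨h3, h4⟩
      exact absurd h4 (ne_of_lt h2)
    rw [F2 x, hCCltdef, hCCledef]
    simp only [Nat.card_coe_set_eq]
    rw [hsplit, Set.ncard_union_eq hdisj (F1lt (R x)) (F1lev x)]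
  -- (F4) doubling
  have F4 : ∀ B : ℝ, B0 < B →
      CCle ((q : ℝ) * B) = q ^ r * CCle B ∧ CClt ((q : ℝ) * B) = q ^ r * CClt B := by
    intro B hB
    have hBu : ‖u‖ < B := lt_of_le_of_lt (le_max_left _ _) hB
    have hBw : ∀ c, ‖wmap b c‖ < B := fun c =>
      lt_of_le_of_lt (le_trans (hBw c) (le_max_right _ _)) hB
    have hBpos : 0 < B := lt_of_le_of_lt (norm_nonneg u) hBu
    have hBq : B ≤ (q : ℝ) * B := le_mul_of_one_le_left hBpos.le hq1R.le
    constructor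
    · simp only [hCCledef]
      rw [translate_card u hna Λ (· ≤ (q : ℝ) * B) (fun a c hac hc => le_trans hac hc)
        (le_trans hBu.le hBq)]
      rw [doubling_card q hq hli hspan hna ht (· ≤ B) (· ≤ (q : ℝ) * B)
        (fun a c hac hc => le_trans hac hc)
        (fun s _ => mul_le_mul_iff_right₀ hq0R)
        (fun c => le_trans (hBw c).le hBq)]
      rw [translate_card u hna Λ (· ≤ B) (fun a c hac hc => le_trans hac hc) hBu.le]
    · simp only [hCCltdef]
      rw [translate_card u hna Λ (· < (q : ℝ) * B) (fun a c hac hc => lt_of_le_of_lt hac hc)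
        (lt_of_lt_of_le hBu hBq)]
      rw [doubling_card q hq hli hspan hna ht (· < B) (· < (q : ℝ) * B)
        (fun a c hac hc => lt_of_le_of_lt hac hc)
        (fun s _ => mul_lt_mul_iff_right₀ hq0R)
        (fun c => lt_of_lt_of_le (hBw c) hBq)]
      rw [translate_card u hna Λ (· < B) (fun a c hac hc => lt_of_le_of_lt hac hc) hBu]
  -- (F5) R x = q * R (x-1)
  have F5 : ∀ x : ℚ, R x = (q : ℝ) * R (x - 1) := by
    intro x
    show (q : ℝ) ^ ((x : ℚ) : ℝ) = (q : ℝ) * (q : ℝ) ^ ((x - 1 : ℚ) : ℝ)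
    have hx : ((x : ℚ) : ℝ) = 1 + ((x - 1 : ℚ) : ℝ) := by push_cast; ring
    rw [hx, Real.rpow_add hq0R, Real.rpow_one]

  -- (F6) radius comparison
  have F6 : ∀ x : ℚ, (n : ℚ) ≤ x → B0 < R x := by
    intro x hx
    have h1 : (q : ℝ) ^ ((n : ℚ) : ℝ) ≤ R x := by
      rw [hRdef]
      exact (Real.rpow_le_rpow_left_iff hq1R).mpr (by exact_mod_cast hx)
    have h2 : ((n : ℚ) : ℝ) = (n : ℝ) := by push_cast; ring
    calc B0 < (q : ℝ) ^ n := hn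
    _ = (q : ℝ) ^ ((n : ℚ) : ℝ) := by rw [h2, Real.rpow_natCast]
    _ ≤ R x := h1
  -- (F7) eventual functional equation for the coefficients
  have F7 : ∀ x : ℚ, (n : ℚ) ≤ x - 1 → NN x = q ^ r * NN (x - 1) := by
    intro x hx
    have hB := F4 (R (x - 1)) (F6 _ hx)
    have h3a := F3 x
    have h3b := F3 (x - 1)
    rw [F5 x, hB.1, hB.2, ← h3b, mul_add] at h3a
    exact Nat.add_left_cancel h3a
  -- the "norm exponent" function
  have hrpow_inj : ∀ s t : ℚ, (q : ℝ) ^ ((s : ℚ) : ℝ) = (q : ℝ) ^ ((t : ℚ) : ℝ) → s = t := by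
    intro s t h
    have h1 : ((s : ℚ) : ℝ) ≤ ((t : ℚ) : ℝ) := (Real.rpow_le_rpow_left_iff hq1R).mp h.le
    have h2 : ((t : ℚ) : ℝ) ≤ ((s : ℚ) : ℝ) := (Real.rpow_le_rpow_left_iff hq1R).mp h.ge
    exact_mod_cast le_antisymm h1 h2
  set phi : L → ℚ := fun l =>
    if h : ∃ s : ℚ, ‖l‖ = (q : ℝ) ^ ((s : ℚ) : ℝ) then h.choose else 0 with hphidef
  have hphi : ∀ (x : ℚ) (l : L), l ∈ lev x → phi l = x := by
    intro x l hl
    have hex : ∃ s : ℚ, ‖l‖ = (q : ℝ) ^ ((s : ℚ) : ℝ) := ⟨x, hl.2⟩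
    have h1 : phi l = hex.choose := by rw [hphidef]; exact dif_pos hex
    refine h1 ▸ hrpow_inj _ _ ?_
    rw [← hex.choose_spec]
    exact hl.2
  -- (F8) finiteness of the support sets
  have F8 : ∀ Y : ℚ, {x : ℚ | x ≤ Y ∧ NN x ≠ 0}.Finite := by
    intro Y
    have hsub : {x : ℚ | x ≤ Y ∧ NN x ≠ 0} ⊆ phi '' {l : L | l - u ∈ Λ ∧ ‖l‖ ≤ R Y} := by
      rintro x ⟨hxY, hx0⟩
      have hne : (lev x).Nonempty := by
        rw [F2 x, Nat.card_coe_set_eq] at hx0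
        exact Set.nonempty_of_ncard_ne_zero hx0
      obtain ⟨l, hl⟩ := hne
      refine ⟨l, ⟨hl.1, ?_⟩, hphi x l hl⟩
      rw [hl.2, hRdef]
      exact (Real.rpow_le_rpow_left_iff hq1R).mpr (by exact_mod_cast hxY)
    exact ((F1 (R Y)).image phi).subset hsub
  set SF : ℚ → Finset ℚ := fun Y => (F8 Y).toFinset with hSFdef
  have hSFmem : ∀ (Y x : ℚ), x ∈ SF Y ↔ (x ≤ Y ∧ NN x ≠ 0) := by
    intro Y x
    rw [hSFdef]
    exact Set.Finite.mem_toFinset _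
  -- (F9) cumulative counting
  have hCfin : ∀ Y : ℚ, {l : L | l ≠ 0 ∧ l - u ∈ Λ ∧ ‖l‖ ≤ R Y}.Finite := fun Y =>
    (F1 (R Y)).subset (by rintro l ⟨_, h1, h2⟩; exact ⟨h1, h2⟩)
  have F9 : ∀ Y : ℚ, ∑ x ∈ SF Y, NN x
      = Nat.card {l : L | l ≠ 0 ∧ l - u ∈ Λ ∧ ‖l‖ ≤ R Y} := by
    intro Y
    have hunion : (hCfin Y).toFinset = (SF Y).biUnion (fun x => (F1lev x).toFinset) := by
      ext l
      simp only [Set.Finite.mem_toFinset, Finset.mem_biUnion]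
      constructor
      · rintro ⟨h0, h1, h2⟩
        obtain ⟨s, hs⟩ := hval l h0
        have hlev : l ∈ lev s := ⟨h1, hs⟩
        refine ⟨s, ?_, hlev⟩
        rw [hSFmem]
        constructor
        · have hle : (q : ℝ) ^ ((s : ℚ) : ℝ) ≤ (q : ℝ) ^ ((Y : ℚ) : ℝ) := by
            rw [← hs]; exact h2
          exact_mod_cast (Real.rpow_le_rpow_left_iff hq1R).mp hle
        · rw [F2 s, Nat.card_coe_set_eq]
          exact ((Set.ncard_pos (F1lev s)).mpr ⟨l, hlev⟩).ne'
      · rintro ⟨x, hx, hl⟩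
        rw [hSFmem] at hx
        have hpos : (0 : ℝ) < ‖l‖ := hl.2 ▸ Real.rpow_pos_of_pos hq0R _
        refine ⟨norm_pos_iff.mp hpos, hl.1, ?_⟩
        rw [hl.2, hRdef]
        exact (Real.rpow_le_rpow_left_iff hq1R).mpr (by exact_mod_cast hx.1)
    have hdisj : ∀ x ∈ SF Y, ∀ y ∈ SF Y, x ≠ y →
        Disjoint ((F1lev x).toFinset) ((F1lev y).toFinset) := by
      intro x _ y _ hxy
      rw [Finset.disjoint_left]
      intro l hlx hly
      rw [Set.Finite.mem_toFinset] at hlx hly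
      exact hxy (hrpow_inj x y (hlx.2.symm.trans hly.2))
    calc ∑ x ∈ SF Y, NN x = ∑ x ∈ SF Y, ((F1lev x).toFinset).card := by
          refine Finset.sum_congr rfl fun x _ => ?_
          rw [F2 x, Nat.card_coe_set_eq, Set.ncard_eq_toFinset_card _ (F1lev x)]
    _ = ((SF Y).biUnion (fun x => (F1lev x).toFinset)).card :=
          (Finset.card_biUnion hdisj).symm
    _ = (hCfin Y).toFinset.card := by rw [hunion]
    _ = Nat.card {l : L | l ≠ 0 ∧ l - u ∈ Λ ∧ ‖l‖ ≤ R Y} := by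
          rw [Nat.card_coe_set_eq, Set.ncard_eq_toFinset_card _ (hCfin Y)]
  -- (F13) relating the cumulative count with the full ball count
  have F13 : ∀ Y : ℚ, (Nat.card {l : L | l ≠ 0 ∧ l - u ∈ Λ ∧ ‖l‖ ≤ R Y} : ℤ)
      = (CCle (R Y) : ℤ) - (if u ∈ Λ then 1 else 0) := by
    intro Y
    have hR0 : (0 : ℝ) ≤ R Y := by rw [hRdef]; exact (Real.rpow_pos_of_pos hq0R _).le
    by_cases hUL : u ∈ Λ
    · have hins : {l : L | l - u ∈ Λ ∧ ‖l‖ ≤ R Y}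
          = insert 0 {l : L | l ≠ 0 ∧ l - u ∈ Λ ∧ ‖l‖ ≤ R Y} := by
        ext l
        simp only [Set.mem_setOf_eq, Set.mem_insert_iff]
        constructor
        · rintro ⟨h1, h2⟩
          rcases eq_or_ne l 0 with h | h
          · exact Or.inl h
          · exact Or.inr ⟨h, h1, h2⟩
        · rintro (h | ⟨_, h1, h2⟩)
          · subst h
            refine ⟨?_, by simpa using hR0⟩
            simpa using Submodule.neg_mem _ hUL
          · exact ⟨h1, h2⟩
      have h0nm : (0 : L) ∉ {l : L | l ≠ 0 ∧ l - u ∈ Λ ∧ ‖l‖ ≤ R Y} := by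
        simp [Set.mem_setOf_eq]
      have : CCle (R Y) = Nat.card {l : L | l ≠ 0 ∧ l - u ∈ Λ ∧ ‖l‖ ≤ R Y} + 1 := by
        simp only [hCCledef]
        rw [Nat.card_coe_set_eq, Nat.card_coe_set_eq, hins,
          Set.ncard_insert_of_notMem h0nm (hCfin Y)]
      rw [this, if_pos hUL]
      push_cast
      ring
    · have hset : {l : L | l - u ∈ Λ ∧ ‖l‖ ≤ R Y}
          = {l : L | l ≠ 0 ∧ l - u ∈ Λ ∧ ‖l‖ ≤ R Y} := by
        ext l
        simp only [Set.mem_setOf_eq]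
        constructor
        · rintro ⟨h1, h2⟩
          refine ⟨?_, h1, h2⟩
          rintro rfl
          exact hUL (by simpa using Submodule.neg_mem _ h1)
        · rintro ⟨_, h1, h2⟩
          exact ⟨h1, h2⟩
      have : CCle (R Y) = Nat.card {l : L | l ≠ 0 ∧ l - u ∈ Λ ∧ ‖l‖ ≤ R Y} := by
        simp only [hCCledef]
        rw [hset]
      rw [this, if_neg hUL]
      push_cast
      ring
  -- the support of the summand
  set G : Finset ℚ := SF M ∪ (SF (M - 1)).image (· + 1) with hGdef
  have hsupp : (Function.support fun x : ℚ =>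
      ((zCoef q Λ u x : ℤ) - (q : ℤ) ^ r * zCoef q Λ u (x - 1))) ⊆ ↑G := by
    intro x hx
    simp only [Function.mem_support] at hx
    by_cases hxM : x ≤ M
    · rcases eq_or_ne (NN x) 0 with h0 | h0
      · have h1 : NN (x - 1) ≠ 0 := by
          intro h
          apply hx
          have e0 : zCoef q Λ u x = 0 := h0
          have e1 : zCoef q Λ u (x - 1) = 0 := h
          rw [e0, e1]
          simp
        have : x - 1 ∈ SF (M - 1) := (hSFmem _ _).mpr ⟨by linarith, h1⟩
        rw [hGdef]
        refine Finset.mem_coe.mpr (Finset.mem_union_right _ ?_)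
        exact Finset.mem_image.mpr ⟨x - 1, this, by ring⟩
      · rw [hGdef]
        exact Finset.mem_coe.mpr (Finset.mem_union_left _ ((hSFmem _ _).mpr ⟨hxM, h0⟩))
    · exfalso
      push_neg at hxM
      have hx1 : (n : ℚ) ≤ x - 1 := by
        rw [hMdef] at hxM
        linarith
      have := F7 x hx1
      apply hx
      have e : zCoef q Λ u x = q ^ r * zCoef q Λ u (x - 1) := this
      rw [e]
      push_cast
      ring
  have hfs : (∑ᶠ x : ℚ, ((zCoef q Λ u x : ℤ) - (q : ℤ) ^ r * zCoef q Λ u (x - 1)))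
      = ∑ x ∈ G, ((zCoef q Λ u x : ℤ) - (q : ℤ) ^ r * zCoef q Λ u (x - 1)) :=
    finsum_eq_finset_sum_of_support_subset _ hsupp
  -- reorganizing the finite sum
  have hsum1 : ∑ x ∈ G, (NN x : ℤ) = ∑ x ∈ SF M, (NN x : ℤ) := by
    refine (Finset.sum_subset (by rw [hGdef]; exact Finset.subset_union_left) ?_).symm
    intro x hxG hxS
    rw [hGdef] at hxG
    rcases Finset.mem_union.mp hxG with h | h
    · exact absurd h hxS
    · obtain ⟨s, hs, rfl⟩ := Finset.mem_image.mp h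
      have hsM : s ≤ M - 1 := ((hSFmem _ _).mp hs).1
      have hxM : s + 1 ≤ M := by linarith
      have : NN (s + 1) = 0 := by
        by_contra h0
        exact hxS ((hSFmem _ _).mpr ⟨hxM, h0⟩)
      exact_mod_cast congrArg (fun k : ℕ => (k : ℤ)) this
  have hsum2 : ∑ x ∈ G, (NN (x - 1) : ℤ) = ∑ x ∈ SF (M - 1), (NN x : ℤ) := by
    have himg : ∑ x ∈ (SF (M - 1)).image (· + 1), (NN (x - 1) : ℤ)
        = ∑ x ∈ SF (M - 1), (NN x : ℤ) := by
      rw [Finset.sum_image (by intro a _ b _ h; linarith)]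
      refine Finset.sum_congr rfl fun s _ => ?_
      norm_num
    rw [← himg]
    refine (Finset.sum_subset (by rw [hGdef]; exact Finset.subset_union_right) ?_).symm
    intro x hxG hxI
    rw [hGdef] at hxG
    rcases Finset.mem_union.mp hxG with h | h
    · have hxM : x ≤ M := ((hSFmem _ _).mp h).1
      have : NN (x - 1) = 0 := by
        by_contra h0
        refine hxI (Finset.mem_image.mpr ⟨x - 1, (hSFmem _ _).mpr ⟨by linarith, h0⟩, by ring⟩)
      exact_mod_cast congrArg (fun k : ℕ => (k : ℤ)) this
    · exact absurd h hxI
  have hsplit : ∑ x ∈ G, ((zCoef q Λ u x : ℤ) - (q : ℤ) ^ r * zCoef q Λ u (x - 1))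
      = ∑ x ∈ SF M, (NN x : ℤ) - (q : ℤ) ^ r * ∑ x ∈ SF (M - 1), (NN x : ℤ) := by
    rw [Finset.sum_sub_distrib, ← Finset.mul_sum, hsum1, hsum2]
  -- final computation
  have hMn : (n : ℚ) ≤ M - 1 := by rw [hMdef]; linarith
  have hdbl := (F4 (R (M - 1)) (F6 _ hMn)).1
  rw [← F5 M] at hdbl
  have h9M : (∑ x ∈ SF M, (NN x : ℤ)) = (CCle (R M) : ℤ) - (if u ∈ Λ then 1 else 0) := by
    rw [← F13 M, ← F9 M]
    push_cast
    ring
  have h9M1 : (∑ x ∈ SF (M - 1), (NN x : ℤ))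
      = (CCle (R (M - 1)) : ℤ) - (if u ∈ Λ then 1 else 0) := by
    rw [← F13 (M - 1), ← F9 (M - 1)]
    push_cast
    ring
  rw [hfs, hsplit, h9M, h9M1]
  have hd : (CCle (R M) : ℤ) = (q : ℤ) ^ r * (CCle (R (M - 1)) : ℤ) := by
    rw [hdbl]
    push_cast
    ring
  rw [hd]
  by_cases hUL : u ∈ Λ
  · simp only [if_pos hUL]
    ring
  · simp only [if_neg hUL]
    ring
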